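/- The number of boxes of a partition λ with first-column hook length set A equals the number of pairs (a,b) ∈ ℕ² with a > b, a ∈ A, and b ∉ A, which in turn equals sum(A) − C(|A|,2). -/

import Mathlib

inductive Letter | S | T
deriving DecidableEq, Repr

open Letter

/-- Number of occurrences of `u` as a (not necessarily contiguous) subsequence of `w`. -/
def cnt (u w : List Letter) : ℕ := w.sublists.count u


/-- A partition given by its (weakly decreasing, positive) list of row lengths. -/
def IsPartitionL (l : List ℕ) : Prop := l.Pairwise (· ≥ ·) ∧ ∀ x ∈ l, 0 < x

/-- Hook length of the box in row `i`, column `j` (both 0-indexed). -/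
def hook (l : List ℕ) (i j : ℕ) : ℕ :=
  (l.getD i 0 - j) + (l.drop (i+1)).countP (fun r => decide (j < r))

/-- `l` is a `p`-core partition: no hook length equals `p`. -/
def IsCore (p : ℕ) (l : List ℕ) : Prop :=
  ∀ i j, i < l.length → j < l.getD i 0 → hook l i j ≠ p

/-- The set of first-column hook lengths of `l`. -/
def fch (l : List ℕ) : Finset ℕ :=
  Finset.image (fun i => l.getD i 0 + (l.length - 1 - i)) (Finset.range l.length)

private lemma sum_getD_aux (l : List ℕ) :
    ∑ i ∈ Finset.range l.length, l.getD i 0 = l.sum := by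
  induction l with
  | nil => simp
  | cons a l ih =>
    rw [List.length_cons, Finset.sum_range_succ']
    simp only [List.getD_cons_succ, List.getD_cons_zero, ih, List.sum_cons, Nat.add_comm]

private lemma sum_range_id_choose (n : ℕ) : ∑ i ∈ Finset.range n, i = n.choose 2 := by
  rw [Nat.choose_two_right, ← Finset.sum_range_id_mul_two n, Nat.mul_div_cancel _ two_pos]

theorem stmt17 (l : List ℕ) (hl : IsPartitionL l) (A : Finset ℕ) (hA : A = fch l) :
    l.sum = Nat.card {p : ℕ × ℕ // p.2 < p.1 ∧ p.1 ∈ A ∧ p.2 ∉ A} ∧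
      l.sum = (∑ a ∈ A, a) - A.card.choose 2 := by
  classical
  set n := l.length with hn
  set f : ℕ → ℕ := fun i => l.getD i 0 + (n - 1 - i) with hf
  have hAeq : A = (Finset.range n).image f := hA
  -- strict antitonicity
  have hanti : ∀ i j, i < n → j < n → i < j → f j < f i := by
    intro i j hi hj hij
    have hle : l.getD j 0 ≤ l.getD i 0 := by
      rw [List.getD_eq_getElem l 0 hi, List.getD_eq_getElem l 0 hj]
      exact hl.1.rel_get_of_le (a := ⟨i, hi⟩) (b := ⟨j, hj⟩) hij.le
    simp only [hf]
    omega
  have hiff : ∀ i j, i < n → j < n → (f j < f i ↔ i < j) := by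
    intro i j hi hj
    constructor
    · intro h
      rcases lt_trichotomy i j with h' | rfl | h'
      · exact h'
      · omega
      · exact absurd (hanti j i hj hi h') (by omega)
    · exact hanti i j hi hj
  have hinj : Set.InjOn f (Finset.range n) := by
    intro i hi j hj hijeq
    simp only [Finset.coe_range, Set.mem_Iio] at hi hj
    rcases lt_trichotomy i j with h' | h' | h'
    · exact absurd hijeq (Nat.ne_of_gt (hanti i j hi hj h'))
    · exact h'
    · exact absurd hijeq (Nat.ne_of_lt (hanti j i hj hi h'))
  -- number of proper b's below f i
  have key : ∀ i, i < n →
      ((Finset.range (f i)).filter (fun b => b ∉ A)).card = l.getD i 0 := by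
    intro i hi
    have h1 : ((Finset.range (f i)).filter (fun b => b ∈ A)).card
        + ((Finset.range (f i)).filter (fun b => b ∉ A)).card = f i := by
      rw [Finset.card_filter_add_card_filter_not, Finset.card_range]
    have h2 : (Finset.range (f i)).filter (fun b => b ∈ A)
        = (Finset.Ioo i n).image f := by
      ext b
      simp only [Finset.mem_filter, Finset.mem_range, hAeq, Finset.mem_image,
        Finset.mem_Ioo]
      constructor
      · rintro ⟨hb, j, hj, rfl⟩
        exact ⟨j, ⟨(hiff i j hi hj).1 hb, hj⟩, rfl⟩
      · rintro ⟨j, ⟨hij, hj⟩, rfl⟩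
        exact ⟨(hiff i j hi hj).2 hij, j, hj, rfl⟩
    have h3 : ((Finset.Ioo i n).image f).card = n - 1 - i := by
      rw [Finset.card_image_of_injOn (hinj.mono (by
        intro x hx
        simp only [Finset.coe_Ioo, Set.mem_Ioo] at hx
        simp [hx.2])), Nat.card_Ioo]
      omega
    have hfi : f i = l.getD i 0 + (n - 1 - i) := rfl
    rw [h2, h3] at h1
    omega
  -- the finset of pairs
  set S : Finset (ℕ × ℕ) := A.biUnion
    (fun a => ((Finset.range a).filter (fun b => b ∉ A)).image (fun b => (a, b))) with hS
  have memS : ∀ p : ℕ × ℕ, p ∈ S ↔ p.2 < p.1 ∧ p.1 ∈ A ∧ p.2 ∉ A := by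
    rintro ⟨x, y⟩
    simp only [hS, Finset.mem_biUnion, Finset.mem_image, Finset.mem_filter,
      Finset.mem_range, Prod.mk.injEq]
    constructor
    · rintro ⟨a, ha, b, ⟨hb, hbA⟩, rfl, rfl⟩
      exact ⟨hb, ha, hbA⟩
    · rintro ⟨hxy, hx, hy⟩
      exact ⟨x, hx, y, ⟨hxy, hy⟩, rfl, rfl⟩
  have cardS : S.card = l.sum := by
    rw [hS, Finset.card_biUnion]
    · have himg : ∀ a ∈ A,
          (((Finset.range a).filter (fun b => b ∉ A)).image (fun b => (a, b))).card
          = ((Finset.range a).filter (fun b => b ∉ A)).card := by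
        intro a _
        exact Finset.card_image_of_injective _ (fun b c h => by
          simpa using congrArg Prod.snd h)
      rw [Finset.sum_congr rfl himg, hAeq, Finset.sum_image (fun i hi j hj h =>
        hinj (by simpa using hi) (by simpa using hj) h)]
      rw [← sum_getD_aux l]
      exact Finset.sum_congr rfl (fun i hi => by
        rw [hAeq] at key
        exact key i (Finset.mem_range.mp hi))
    · intro a ha b hb hab
      simp only [Finset.disjoint_left, Finset.mem_image, Finset.mem_filter]
      rintro p ⟨c, _, rfl⟩ ⟨d, _, heq⟩
      exact hab (congrArg Prod.fst heq).symm
  constructor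
  · -- first equality
    have hcongr : Nat.card {p : ℕ × ℕ // p.2 < p.1 ∧ p.1 ∈ A ∧ p.2 ∉ A}
        = Nat.card {p : ℕ × ℕ // p ∈ S} :=
      Nat.card_congr (Equiv.subtypeEquivRight (fun p => (memS p).symm))
    rw [hcongr, Nat.card_eq_finsetCard S, cardS]
  · -- second equality
    have hcard : A.card = n := by
      rw [hAeq, Finset.card_image_of_injOn (by simpa using hinj), Finset.card_range]
    have hsum : ∑ a ∈ A, a = l.sum + n.choose 2 := by
      rw [hAeq, Finset.sum_image (fun i hi j hj h =>
        hinj (by simpa using hi) (by simpa using hj) h)]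
      have : ∑ i ∈ Finset.range n, f i
          = (∑ i ∈ Finset.range n, l.getD i 0) + ∑ i ∈ Finset.range n, (n - 1 - i) := by
        rw [← Finset.sum_add_distrib]
      rw [this, sum_getD_aux l, Finset.sum_range_reflect (fun i => i) n,
        sum_range_id_choose]
    rw [hsum, hcard]
    omega
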